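/- (Kernel flow identity.) In the setting of the Hankel flow identity, with K_t = ℋ(b)ℋ(b)^⊤ and h_a^{(r)} = ℋ(b)ρ_a^{(r)}, one has for each 1 ≤ r ≤ M: ∂_{t_r} K_t = (S*)^r K_t - S^r K_t + K_t S^r - K_t (S*)^r - Σ_{a=0}^{r-1} [e_a (h_a^{(r)})^⊤ + h_a^{(r)} e_a^⊤], the derivative taken in trace norm. -/

import Mathlib

/-- The `k`-th Fourier coefficient of a function on the unit circle. -/
noncomputable def fc (f : ℂ → ℂ) (k : ℤ) : ℂ :=
  (2 * (Real.pi : ℂ) * Complex.I)⁻¹ * (∮ z in C(0, 1), f z * z ^ (-k - 1))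

/-- The Fourier coefficients `b_n(t)` of `b(z;t) = exp(Σ_{r=1}^M t_r(z^{-r} - z^r))`. -/
noncomputable def bcoef {M : ℕ} (t : Fin M → ℂ) (n : ℤ) : ℂ :=
  fc (fun z => Complex.exp
    (∑ r : Fin M, t r * (z ^ (-((r : ℤ) + 1)) - z ^ ((r : ℤ) + 1)))) n

/-- The kernel `K_t = ℋ(b)ℋ(b)^⊤`, with entries `K_t(i,j) = Σ_ℓ b_{i+ℓ+1} b_{j+ℓ+1}`. -/
noncomputable def Kmat {M : ℕ} (t : Fin M → ℂ) (i j : ℕ) : ℂ :=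
  ∑' ℓ : ℕ, bcoef t ((i : ℤ) + ℓ + 1) * bcoef t ((j : ℤ) + ℓ + 1)

/-- The vector `h_a^{(r)} = ℋ(b) ρ_a^{(r)}`, i.e. `h_a^{(r)}[m] = Σ_ℓ b_{m+ℓ+1} b_{ℓ+a+1-r}`. -/
noncomputable def hvec {M : ℕ} (t : Fin M → ℂ) (rr : ℕ) (a m : ℕ) : ℂ :=
  ∑' ℓ : ℕ, bcoef t ((m : ℤ) + ℓ + 1) * bcoef t ((ℓ : ℤ) + a + 1 - rr)

open Complex Metric Function Finset

namespace KFA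

variable {M : ℕ}

noncomputable def gf (t : Fin M → ℂ) (z : ℂ) : ℂ :=
  Complex.exp (∑ r : Fin M, t r * (z ^ (-((r : ℤ) + 1)) - z ^ ((r : ℤ) + 1)))

lemma bcoef_eq_gf (t : Fin M → ℂ) (n : ℤ) :
    bcoef t n = (2 * (Real.pi : ℂ) * Complex.I)⁻¹ *
      (∮ z in C(0, 1), gf t z * z ^ (-n - 1)) := rfl

lemma gf_differentiableAt (t : Fin M → ℂ) {z : ℂ} (hz : z ≠ 0) :
    DifferentiableAt ℂ (gf t) z := by
  unfold gf
  apply DifferentiableAt.cexp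
  exact DifferentiableAt.fun_sum fun r _ =>
    (differentiableAt_const _).mul
      ((differentiableAt_zpow.2 (Or.inl hz)).sub (differentiableAt_zpow.2 (Or.inl hz)))

lemma gf_mul_zpow_diffAt (t : Fin M → ℂ) (m : ℤ) {z : ℂ} (hz : z ≠ 0) :
    DifferentiableAt ℂ (fun z => gf t z * z ^ m) z :=
  (gf_differentiableAt t hz).mul (differentiableAt_zpow.2 (Or.inl hz))

lemma gf_contOn (t : Fin M → ℂ) (m : ℤ) {s : Set ℂ} (hs : ∀ z ∈ s, z ≠ (0:ℂ)) :
    ContinuousOn (fun z => gf t z * z ^ m) s := fun z hz =>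
  ((gf_mul_zpow_diffAt t m (hs z hz)).continuousAt).continuousWithinAt

lemma circleInt_anti (t : Fin M → ℂ) (m : ℤ) {a b : ℝ} (ha : 0 < a) (hab : a ≤ b) :
    (∮ z in C(0, b), gf t z * z ^ m) = ∮ z in C(0, a), gf t z * z ^ m := by
  apply circleIntegral_eq_of_differentiable_on_annulus_off_countable ha hab Set.countable_empty
  · apply gf_contOn
    rintro z ⟨-, hz2⟩ rfl
    exact hz2 (by simpa using ha)
  · rintro z ⟨⟨-, hz2⟩, -⟩
    refine gf_mul_zpow_diffAt t m fun h => hz2 ?_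
    simp [h, ha.le]
lemma norm_gf_le (t : Fin M → ℂ) {z : ℂ} {R : ℝ} (h1 : 1 ≤ R) (hz : ‖z‖ = R) :
    ‖gf t z‖ ≤ Real.exp (2 * R ^ M * ∑ r', ‖t r'‖) := by
  rw [gf, Complex.norm_exp]
  apply Real.exp_le_exp.2
  calc (∑ r : Fin M, t r * (z ^ (-((r : ℤ) + 1)) - z ^ ((r : ℤ) + 1))).re
      ≤ ‖∑ r : Fin M, t r * (z ^ (-((r : ℤ) + 1)) - z ^ ((r : ℤ) + 1))‖ := Complex.re_le_norm _
    _ ≤ ∑ r : Fin M, ‖t r * (z ^ (-((r : ℤ) + 1)) - z ^ ((r : ℤ) + 1))‖ := norm_sum_le _ _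
    _ ≤ ∑ r : Fin M, ‖t r‖ * (2 * R ^ M) := by
        apply Finset.sum_le_sum
        intro r' _
        rw [norm_mul]
        apply mul_le_mul_of_nonneg_left _ (norm_nonneg _)
        have e1 : ‖z ^ (-((r' : ℤ) + 1))‖ ≤ 1 := by
          rw [norm_zpow, hz]
          exact zpow_le_one_of_nonpos₀ h1 (by omega)
        have e2 : ‖z ^ ((r' : ℤ) + 1)‖ ≤ R ^ M := by
          rw [norm_zpow, hz]
          rw [show ((r' : ℤ) + 1) = (((r' : ℕ) + 1 : ℕ) : ℤ) by push_cast; ring, zpow_natCast]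
          exact pow_le_pow_right₀ h1 r'.isLt
        have hRM : (1:ℝ) ≤ R ^ M := one_le_pow₀ h1
        calc ‖z ^ (-((r' : ℤ) + 1)) - z ^ ((r' : ℤ) + 1)‖
            ≤ ‖z ^ (-((r' : ℤ) + 1))‖ + ‖z ^ ((r' : ℤ) + 1)‖ := norm_sub_le _ _
          _ ≤ 1 + R ^ M := add_le_add e1 e2
          _ ≤ 2 * R ^ M := by linarith
    _ = 2 * R ^ M * ∑ r', ‖t r'‖ := by rw [← Finset.sum_mul]; ring

lemma bcoef_norm_le (t : Fin M → ℂ) (n : ℤ) :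
    ‖bcoef t n‖ ≤ Real.exp (2 * 2 ^ M * ∑ r', ‖t r'‖) * (2:ℝ) ^ (-n) := by
  set E := Real.exp (2 * 2 ^ M * ∑ r', ‖t r'‖) with hE
  rw [bcoef_eq_gf, ← circleInt_anti t (-n-1) one_pos one_le_two, norm_mul]
  have h1 : ‖(2 * (Real.pi:ℂ) * Complex.I)⁻¹‖ = (2 * Real.pi)⁻¹ := by
    rw [norm_inv]
    simp [_root_.abs_of_pos Real.pi_pos]
  rw [h1]
  have h2 : ‖∮ z in C(0,(2:ℝ)), gf t z * z ^ (-n-1)‖ ≤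
      2 * Real.pi * 2 * (E * (2:ℝ) ^ (-n-1)) := by
    apply circleIntegral.norm_integral_le_of_norm_le_const (by norm_num)
    intro z hz
    have hz2 : ‖z‖ = 2 := by simpa using hz
    rw [norm_mul, norm_zpow, hz2]
    exact mul_le_mul_of_nonneg_right
      (by simpa [hE] using norm_gf_le t one_le_two hz2) (by positivity)
  calc (2*Real.pi)⁻¹ * ‖∮ z in C(0,(2:ℝ)), gf t z * z ^ (-n-1)‖
      ≤ (2*Real.pi)⁻¹ * (2 * Real.pi * 2 * (E * (2:ℝ) ^ (-n-1))) := by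
        exact mul_le_mul_of_nonneg_left h2 (by positivity)
    _ = E * (2:ℝ) ^ (-n) := by
        rw [show (-n : ℤ) = 1 + (-n-1) by ring, zpow_add₀ (two_ne_zero) 1 (-n-1), zpow_one]
        have hpi : Real.pi ≠ 0 := Real.pi_ne_zero
        field_simp
        ring

lemma cont_gf_circ0 (t : Fin M → ℂ) :
    Continuous fun θ : ℝ => gf t (circleMap 0 1 θ) := by
  have h0 : ∀ θ : ℝ, circleMap 0 1 θ ≠ 0 := fun θ => circleMap_ne_center one_ne_zero
  unfold gf
  apply Complex.continuous_exp.comp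
  apply continuous_finset_sum
  intro r' _
  exact continuous_const.mul
    (((continuous_circleMap 0 1).zpow₀ _ fun θ => Or.inl (h0 θ)).sub
      ((continuous_circleMap 0 1).zpow₀ _ fun θ => Or.inl (h0 θ)))

lemma cont_zpow_circ (m : ℤ) : Continuous fun θ : ℝ => circleMap 0 1 θ ^ m :=
  (continuous_circleMap 0 1).zpow₀ _ fun θ => Or.inl (circleMap_ne_center one_ne_zero)

lemma sum_update_le (t : Fin M → ℂ) (r : Fin M) (x : ℂ) :
    ∑ r', ‖Function.update t r x r'‖ ≤ (∑ r', ‖t r'‖) + ‖x‖ := by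
  rw [← Finset.add_sum_erase _ (fun r' => ‖Function.update t r x r'‖) (mem_univ r),
    update_self]
  have h1 : ∑ r' ∈ univ.erase r, ‖Function.update t r x r'‖
      = ∑ r' ∈ univ.erase r, ‖t r'‖ :=
    Finset.sum_congr rfl fun x' hx' => by rw [update_of_ne (Finset.ne_of_mem_erase hx')]
  rw [h1]
  have h2 : ∑ r' ∈ univ.erase r, ‖t r'‖ ≤ ∑ r', ‖t r'‖ :=
    Finset.sum_le_sum_of_subset_of_nonneg (Finset.subset_univ _)
      (fun _ _ _ => norm_nonneg _)
  linarith

lemma gf_update_hasDerivAt (t : Fin M → ℂ) (r : Fin M) (w : ℂ) (s : ℂ) :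
    HasDerivAt (fun s' : ℂ => gf (Function.update t r s') w)
      (gf (Function.update t r s) w * (w ^ (-((r:ℤ)+1)) - w ^ ((r:ℤ)+1))) s := by
  have hsum : ∀ s' : ℂ,
      (∑ r' : Fin M, Function.update t r s' r' * (w ^ (-((r':ℤ)+1)) - w ^ ((r':ℤ)+1)))
      = s' * (w ^ (-((r:ℤ)+1)) - w ^ ((r:ℤ)+1))
        + ∑ r' ∈ univ.erase r, t r' * (w ^ (-((r':ℤ)+1)) - w ^ ((r':ℤ)+1)) := by
    intro s'
    rw [← Finset.add_sum_erase _ _ (mem_univ r), update_self]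
    congr 1
    exact Finset.sum_congr rfl fun x hx => by rw [update_of_ne (Finset.ne_of_mem_erase hx)]
  unfold gf
  simp only [hsum]
  exact ((hasDerivAt_mul_const _).add_const _).cexp

lemma bcoef_hasDerivAt (t : Fin M → ℂ) (r : Fin M) (n : ℤ) (s₀ : ℂ) :
    HasDerivAt (fun s : ℂ => bcoef (Function.update t r s) n)
      (bcoef (Function.update t r s₀) (n + (r:ℕ) + 1)
        - bcoef (Function.update t r s₀) (n - (r:ℕ) - 1)) s₀ := by
  have hz0 : ∀ θ : ℝ, circleMap 0 1 θ ≠ 0 := fun θ => circleMap_ne_center one_ne_zero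
  have hz1 : ∀ θ : ℝ, ‖circleMap 0 1 θ‖ = 1 := fun θ => by simp
  set F : ℂ → ℝ → ℂ := fun s θ =>
    deriv (circleMap 0 1) θ •
      (gf (Function.update t r s) (circleMap 0 1 θ) * circleMap 0 1 θ ^ (-n-1)) with hF
  set F' : ℂ → ℝ → ℂ := fun s θ =>
    deriv (circleMap 0 1) θ •
      ((gf (Function.update t r s) (circleMap 0 1 θ)
          * (circleMap 0 1 θ ^ (-((r:ℤ)+1)) - circleMap 0 1 θ ^ ((r:ℤ)+1)))
        * circleMap 0 1 θ ^ (-n-1)) with hF'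
  have hderiv_eq : deriv (circleMap 0 1) = fun θ => circleMap 0 1 θ * Complex.I :=
    funext fun θ => deriv_circleMap 0 1 θ
  have hcontd : Continuous (deriv (circleMap 0 1)) := by
    rw [hderiv_eq]; exact (continuous_circleMap 0 1).mul continuous_const
  have hcontF : ∀ s : ℂ, Continuous (F s) := fun s =>
    hcontd.smul ((cont_gf_circ0 _).mul (cont_zpow_circ _))
  have hcontF' : ∀ s : ℂ, Continuous (F' s) := fun s =>
    hcontd.smul <| ((cont_gf_circ0 _).mul ((cont_zpow_circ _).sub (cont_zpow_circ _))).mul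
        (cont_zpow_circ _)
  set B : ℝ := 2 * Real.exp (2 * ((∑ r', ‖t r'‖) + (‖s₀‖ + 1))) with hB
  have hbound : ∀ (x : ℂ), x ∈ ball s₀ 1 → ∀ θ : ℝ, ‖F' x θ‖ ≤ B := by
    intro x hx θ
    have hxd : ‖x‖ ≤ ‖s₀‖ + 1 := by
      have h := mem_ball_iff_norm.1 hx
      calc ‖x‖ = ‖x - s₀ + s₀‖ := by rw [sub_add_cancel]
        _ ≤ ‖x - s₀‖ + ‖s₀‖ := norm_add_le _ _
        _ ≤ ‖s₀‖ + 1 := by linarith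
    have hgf : ‖gf (Function.update t r x) (circleMap 0 1 θ)‖ ≤
        Real.exp (2 * ((∑ r', ‖t r'‖) + (‖s₀‖ + 1))) := by
      refine le_trans (norm_gf_le _ le_rfl (hz1 θ)) (Real.exp_le_exp.2 ?_)
      have := sum_update_le t r x
      have h2 : ∑ r', ‖Function.update t r x r'‖ ≤ (∑ r', ‖t r'‖) + (‖s₀‖ + 1) := by
        linarith
      simp only [one_pow]
      linarith
    have h3 : ‖circleMap 0 1 θ ^ (-((r:ℤ)+1)) - circleMap 0 1 θ ^ ((r:ℤ)+1)‖ ≤ 2 := by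
      refine le_trans (norm_sub_le _ _) ?_
      rw [norm_zpow, norm_zpow, hz1 θ, one_zpow, one_zpow]
      norm_num
    rw [hF']
    simp only [norm_smul, deriv_circleMap, norm_mul, norm_zpow, hz1 θ]
    simp only [Complex.norm_I, one_zpow]
    rw [hB]
    have habs : ‖(gf (Function.update t r x) (circleMap 0 1 θ))‖ =
        ‖gf (Function.update t r x) (circleMap 0 1 θ)‖ := rfl
    rw [habs]
    have h4 : ‖circleMap 0 1 θ ^ (-((r:ℤ)+1)) - circleMap 0 1 θ ^ ((r:ℤ)+1)‖ ≤ 2 := h3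
    nlinarith [norm_nonneg (gf (Function.update t r x) (circleMap 0 1 θ)),
      Real.exp_pos (2 * ((∑ r', ‖t r'‖) + (‖s₀‖ + 1)))]
  have main := intervalIntegral.hasDerivAt_integral_of_dominated_loc_of_deriv_le
    (F := F) (F' := F') (x₀ := s₀) (a := 0) (b := 2 * Real.pi)
    (μ := MeasureTheory.volume) (bound := fun _ => B) (s := ball s₀ 1) (ball_mem_nhds s₀ one_pos)
    (Filter.Eventually.of_forall fun x => (hcontF x).aestronglyMeasurable)
    ((hcontF s₀).intervalIntegrable _ _)
    ((hcontF' s₀).aestronglyMeasurable)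
    (Filter.Eventually.of_forall fun θ _ x hx => hbound x hx θ)
    intervalIntegrable_const
    (Filter.Eventually.of_forall fun θ _ x _ => by
      exact ((gf_update_hasDerivAt t r (circleMap 0 1 θ) x).mul_const _).fun_const_smul _)
  have H := (main.2).const_mul ((2 * (Real.pi:ℂ) * Complex.I)⁻¹)
  have hint : ∀ (e : ℤ), CircleIntegrable
      (fun z => gf (Function.update t r s₀) z * z ^ e) 0 1 :=
    fun e => ContinuousOn.circleIntegrable zero_le_one
      (gf_contOn _ e fun z hz => by
        rw [mem_sphere_zero_iff_norm] at hz
        intro h; rw [h] at hz; simp at hz)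
  have hsplit : (∫ θ in (0:ℝ)..2 * Real.pi, F' s₀ θ)
      = (∮ z in C(0,1), gf (Function.update t r s₀) z * z ^ (-(n + (r:ℕ) + 1) - 1))
        - ∮ z in C(0,1), gf (Function.update t r s₀) z * z ^ (-(n - (r:ℕ) - 1) - 1) := by
    rw [← circleIntegral.integral_sub (hint _) (hint _)]
    show (∮ z in C(0,1),
        (gf (Function.update t r s₀) z * (z ^ (-((r:ℤ)+1)) - z ^ ((r:ℤ)+1))) * z ^ (-n-1)) = _
    apply circleIntegral.integral_congr zero_le_one
    intro w hw
    have h0 : w ≠ 0 := by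
      rw [mem_sphere_zero_iff_norm] at hw
      intro h; rw [h] at hw; simp at hw
    have e1 : w ^ (-((r:ℤ)+1)) * w ^ (-n-1) = w ^ (-(n + (r:ℕ) + 1) - 1) := by
      rw [← zpow_add₀ h0]; congr 1; push_cast; ring
    have e2 : w ^ ((r:ℤ)+1) * w ^ (-n-1) = w ^ (-(n - (r:ℕ) - 1) - 1) := by
      rw [← zpow_add₀ h0]; congr 1; push_cast; ring
    show (gf (Function.update t r s₀) w * (w ^ (-((r:ℤ)+1)) - w ^ ((r:ℤ)+1))) * w ^ (-n-1) = _
    rw [mul_sub, sub_mul, mul_assoc, mul_assoc, e1, e2]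
  rw [hsplit, mul_sub] at H
  rw [bcoef_eq_gf, bcoef_eq_gf]
  exact H

lemma two_inv_sq (ℓ : ℕ) : ((2:ℝ)⁻¹) ^ ℓ * ((2:ℝ)⁻¹) ^ ℓ = ((4:ℝ)⁻¹) ^ ℓ := by
  rw [← mul_pow]; norm_num

lemma zpow_neg_nat (ℓ : ℕ) : (2:ℝ) ^ (-(ℓ:ℤ)) = ((2:ℝ)⁻¹) ^ ℓ := by
  rw [zpow_neg, zpow_natCast, ← inv_pow]

lemma summable_bb (t : Fin M → ℂ) (c d : ℤ) :
    Summable fun ℓ : ℕ => bcoef t (c + ℓ) * bcoef t (d + ℓ) := by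
  set E := Real.exp (2 * 2 ^ M * ∑ r', ‖t r'‖) with hEdef
  have key : ∀ ℓ : ℕ, ‖bcoef t (c + ℓ) * bcoef t (d + ℓ)‖ ≤
      (E * (2:ℝ) ^ (-c) * (E * (2:ℝ) ^ (-d))) * ((4:ℝ)⁻¹) ^ ℓ := by
    intro ℓ
    rw [norm_mul]
    have h1 := bcoef_norm_le t (c + ℓ)
    have h2 := bcoef_norm_le t (d + ℓ)
    have e : E * (2:ℝ) ^ (-(c + (ℓ:ℤ))) * (E * (2:ℝ) ^ (-(d + (ℓ:ℤ))))
        = (E * (2:ℝ) ^ (-c) * (E * (2:ℝ) ^ (-d))) * ((4:ℝ)⁻¹) ^ ℓ := by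
      rw [show -(c + (ℓ:ℤ)) = -c + -(ℓ:ℤ) by ring, show -(d + (ℓ:ℤ)) = -d + -(ℓ:ℤ) by ring,
        zpow_add₀ (two_ne_zero) (-c), zpow_add₀ (two_ne_zero) (-d),
        zpow_neg_nat, ← two_inv_sq]
      ring
    calc ‖bcoef t (c + ℓ)‖ * ‖bcoef t (d + ℓ)‖
        ≤ (E * (2:ℝ) ^ (-(c + (ℓ:ℤ)))) * (E * (2:ℝ) ^ (-(d + (ℓ:ℤ)))) :=
          mul_le_mul h1 h2 (norm_nonneg _) (by positivity)
      _ = _ := by rw [← mul_assoc] at e ⊢; exact e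
  apply Summable.of_norm
  exact Summable.of_nonneg_of_le (fun _ => norm_nonneg _) key
    ((summable_geometric_of_lt_one (by norm_num) (by norm_num)).mul_left _)

noncomputable def gser (t : Fin M → ℂ) (r : Fin M) (i j : ℕ) (ℓ : ℕ) (s : ℂ) : ℂ :=
  bcoef (Function.update t r s) ((i:ℤ) + ℓ + 1) * bcoef (Function.update t r s) ((j:ℤ) + ℓ + 1)

noncomputable def gser' (t : Fin M → ℂ) (r : Fin M) (i j : ℕ) (ℓ : ℕ) (s : ℂ) : ℂ :=
  (bcoef (Function.update t r s) ((i:ℤ) + ℓ + 1 + (r:ℕ) + 1)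
    - bcoef (Function.update t r s) ((i:ℤ) + ℓ + 1 - (r:ℕ) - 1))
    * bcoef (Function.update t r s) ((j:ℤ) + ℓ + 1)
  + bcoef (Function.update t r s) ((i:ℤ) + ℓ + 1)
    * (bcoef (Function.update t r s) ((j:ℤ) + ℓ + 1 + (r:ℕ) + 1)
      - bcoef (Function.update t r s) ((j:ℤ) + ℓ + 1 - (r:ℕ) - 1))

lemma gser_hasDerivAt (t : Fin M → ℂ) (r : Fin M) (i j ℓ : ℕ) (s : ℂ) :
    HasDerivAt (gser t r i j ℓ) (gser' t r i j ℓ s) s := by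
  unfold gser gser'
  exact (bcoef_hasDerivAt t r _ s).mul (bcoef_hasDerivAt t r _ s)



lemma norm_bcoef_update_ball (t : Fin M → ℂ) (r : Fin M) {s : ℂ} (hs : s ∈ ball (t r) 1)
    (m : ℤ) (ℓ : ℕ) (hm : (ℓ:ℤ) - ((r:ℕ) + 1) ≤ m) :
    ‖bcoef (Function.update t r s) m‖ ≤
      (Real.exp (2 * 2 ^ M * ((∑ r', ‖t r'‖) + (‖t r‖ + 1))) * 2 ^ ((r:ℕ) + 1))
        * ((2:ℝ)⁻¹) ^ ℓ := by
  set T : ℝ := (∑ r', ‖t r'‖) + (‖t r‖ + 1) with hT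
  set CT : ℝ := Real.exp (2 * 2 ^ M * T) with hCT
  have hCTpos : (0:ℝ) < CT := Real.exp_pos _
  have hsn : ‖s‖ ≤ ‖t r‖ + 1 := by
    have h := mem_ball_iff_norm.1 hs
    calc ‖s‖ = ‖s - t r + t r‖ := by rw [sub_add_cancel]
      _ ≤ ‖s - t r‖ + ‖t r‖ := norm_add_le _ _
      _ ≤ ‖t r‖ + 1 := by linarith
  have hsum : ∑ r', ‖Function.update t r s r'‖ ≤ T := by
    have := sum_update_le t r s
    rw [hT]; linarith
  have hE : Real.exp (2 * 2 ^ M * ∑ r', ‖Function.update t r s r'‖) ≤ CT := by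
    rw [hCT]
    exact Real.exp_le_exp.2 (mul_le_mul_of_nonneg_left hsum (by positivity))
  have hzp : (2:ℝ) ^ (-m) ≤ (2:ℝ) ^ (((r:ℕ):ℤ) + 1) * (2:ℝ) ^ (-(ℓ:ℤ)) := by
    rw [← zpow_add₀ (two_ne_zero : (2:ℝ) ≠ 0)]
    exact zpow_le_zpow_right₀ one_le_two (by omega)
  calc ‖bcoef (Function.update t r s) m‖
      ≤ Real.exp (2 * 2 ^ M * ∑ r', ‖Function.update t r s r'‖) * (2:ℝ) ^ (-m) :=
        bcoef_norm_le _ m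
    _ ≤ CT * ((2:ℝ) ^ (((r:ℕ):ℤ) + 1) * (2:ℝ) ^ (-(ℓ:ℤ))) :=
        mul_le_mul hE hzp (by positivity) hCTpos.le
    _ = (CT * 2 ^ ((r:ℕ) + 1)) * ((2:ℝ)⁻¹) ^ ℓ := by
        rw [zpow_neg_nat, show (((r:ℕ):ℤ) + 1) = (((r:ℕ) + 1 : ℕ) : ℤ) by push_cast; ring,
          zpow_natCast, mul_assoc]

lemma gser'_bound (t : Fin M → ℂ) (r : Fin M) (i j : ℕ) (ℓ : ℕ) {s : ℂ}
    (hs : s ∈ ball (t r) 1) :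
    ‖gser' t r i j ℓ s‖ ≤
      4 * (Real.exp (2 * 2 ^ M * ((∑ r', ‖t r'‖) + (‖t r‖ + 1))) * 2 ^ ((r:ℕ) + 1)) ^ 2
        * ((4:ℝ)⁻¹) ^ ℓ := by
  set D : ℝ := Real.exp (2 * 2 ^ M * ((∑ r', ‖t r'‖) + (‖t r‖ + 1))) * 2 ^ ((r:ℕ) + 1) with hD
  have hDpos : (0:ℝ) < D := by rw [hD]; positivity
  have q : ∀ (m : ℤ), (ℓ:ℤ) - ((r:ℕ) + 1) ≤ m →
      ‖bcoef (Function.update t r s) m‖ ≤ D * ((2:ℝ)⁻¹) ^ ℓ :=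
    fun m hm => norm_bcoef_update_ball t r hs m ℓ hm
  have hqpos : (0:ℝ) ≤ ((2:ℝ)⁻¹) ^ ℓ := by positivity
  have b1 : ‖bcoef (Function.update t r s) ((i:ℤ) + ℓ + 1 + (r:ℕ) + 1)
      - bcoef (Function.update t r s) ((i:ℤ) + ℓ + 1 - (r:ℕ) - 1)‖
      ≤ 2 * (D * ((2:ℝ)⁻¹) ^ ℓ) := by
    have h1 := q ((i:ℤ) + ℓ + 1 + (r:ℕ) + 1) (by omega)
    have h2 := q ((i:ℤ) + ℓ + 1 - (r:ℕ) - 1) (by omega)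
    refine le_trans (norm_sub_le _ _) (by linarith)
  have b2 : ‖bcoef (Function.update t r s) ((j:ℤ) + ℓ + 1 + (r:ℕ) + 1)
      - bcoef (Function.update t r s) ((j:ℤ) + ℓ + 1 - (r:ℕ) - 1)‖
      ≤ 2 * (D * ((2:ℝ)⁻¹) ^ ℓ) := by
    have h1 := q ((j:ℤ) + ℓ + 1 + (r:ℕ) + 1) (by omega)
    have h2 := q ((j:ℤ) + ℓ + 1 - (r:ℕ) - 1) (by omega)
    refine le_trans (norm_sub_le _ _) (by linarith)
  have b3 := q ((i:ℤ) + ℓ + 1) (by omega)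
  have b4 := q ((j:ℤ) + ℓ + 1) (by omega)
  have final : (2 * (D * ((2:ℝ)⁻¹) ^ ℓ)) * (D * ((2:ℝ)⁻¹) ^ ℓ)
      + (D * ((2:ℝ)⁻¹) ^ ℓ) * (2 * (D * ((2:ℝ)⁻¹) ^ ℓ)) = 4 * D ^ 2 * ((4:ℝ)⁻¹) ^ ℓ := by
    rw [← two_inv_sq]; ring
  calc ‖gser' t r i j ℓ s‖
      ≤ ‖(bcoef (Function.update t r s) ((i:ℤ) + ℓ + 1 + (r:ℕ) + 1)
          - bcoef (Function.update t r s) ((i:ℤ) + ℓ + 1 - (r:ℕ) - 1))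
          * bcoef (Function.update t r s) ((j:ℤ) + ℓ + 1)‖
        + ‖bcoef (Function.update t r s) ((i:ℤ) + ℓ + 1)
          * (bcoef (Function.update t r s) ((j:ℤ) + ℓ + 1 + (r:ℕ) + 1)
            - bcoef (Function.update t r s) ((j:ℤ) + ℓ + 1 - (r:ℕ) - 1))‖ := norm_add_le _ _
    _ ≤ (2 * (D * ((2:ℝ)⁻¹) ^ ℓ)) * (D * ((2:ℝ)⁻¹) ^ ℓ)
        + (D * ((2:ℝ)⁻¹) ^ ℓ) * (2 * (D * ((2:ℝ)⁻¹) ^ ℓ)) := by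
        rw [norm_mul, norm_mul]
        exact add_le_add
          (mul_le_mul b1 b4 (norm_nonneg _) (by positivity))
          (mul_le_mul b3 b2 (norm_nonneg _) (by positivity))
    _ = _ := final

end KFA

/-- Kernel flow identity:
`∂_{t_r} K_t = (S*)^r K_t - S^r K_t + K_t S^r - K_t (S*)^r - Σ_{a=0}^{r-1}[e_a (h_a^{(r)})^⊤ +
h_a^{(r)} e_a^⊤]`, written entrywise. -/
theorem kernel_flow {M : ℕ} (t : Fin M → ℂ) (r : Fin M) (i j : ℕ) :
    HasDerivAt
      (fun s : ℂ => Kmat (Function.update t r s) i j)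
      (Kmat t (i + ((r : ℕ) + 1)) j
        - (if (r : ℕ) + 1 ≤ i then Kmat t (i - ((r : ℕ) + 1)) j else 0)
        + Kmat t i (j + ((r : ℕ) + 1))
        - (if (r : ℕ) + 1 ≤ j then Kmat t i (j - ((r : ℕ) + 1)) else 0)
        - ((if i < (r : ℕ) + 1 then hvec t ((r : ℕ) + 1) i j else 0)
            + (if j < (r : ℕ) + 1 then hvec t ((r : ℕ) + 1) j i else 0)))
      (t r) := by
  classical
  have hut : Function.update t r (t r) = t := Function.update_eq_self r t
  -- summability of the four pieces at the point t
  have hP1 : Summable (fun ℓ : ℕ =>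
      bcoef t ((i:ℤ) + ℓ + 1 + (r:ℕ) + 1) * bcoef t ((j:ℤ) + ℓ + 1)) :=
    (KFA.summable_bb t ((i:ℤ) + (r:ℕ) + 2) ((j:ℤ) + 1)).congr fun ℓ => by
      rw [show ((i:ℤ) + (r:ℕ) + 2 + ℓ) = ((i:ℤ) + ℓ + 1 + (r:ℕ) + 1) by ring,
        show ((j:ℤ) + 1 + ℓ) = ((j:ℤ) + ℓ + 1) by ring]
  have hQ1 : Summable (fun ℓ : ℕ =>
      bcoef t ((i:ℤ) + ℓ + 1 - (r:ℕ) - 1) * bcoef t ((j:ℤ) + ℓ + 1)) :=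
    (KFA.summable_bb t ((i:ℤ) - (r:ℕ)) ((j:ℤ) + 1)).congr fun ℓ => by
      rw [show ((i:ℤ) - (r:ℕ) + ℓ) = ((i:ℤ) + ℓ + 1 - (r:ℕ) - 1) by ring,
        show ((j:ℤ) + 1 + ℓ) = ((j:ℤ) + ℓ + 1) by ring]
  have hP2 : Summable (fun ℓ : ℕ =>
      bcoef t ((i:ℤ) + ℓ + 1) * bcoef t ((j:ℤ) + ℓ + 1 + (r:ℕ) + 1)) :=
    (KFA.summable_bb t ((i:ℤ) + 1) ((j:ℤ) + (r:ℕ) + 2)).congr fun ℓ => by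
      rw [show ((i:ℤ) + 1 + ℓ) = ((i:ℤ) + ℓ + 1) by ring,
        show ((j:ℤ) + (r:ℕ) + 2 + ℓ) = ((j:ℤ) + ℓ + 1 + (r:ℕ) + 1) by ring]
  have hQ2 : Summable (fun ℓ : ℕ =>
      bcoef t ((i:ℤ) + ℓ + 1) * bcoef t ((j:ℤ) + ℓ + 1 - (r:ℕ) - 1)) :=
    (KFA.summable_bb t ((i:ℤ) + 1) ((j:ℤ) - (r:ℕ))).congr fun ℓ => by
      rw [show ((i:ℤ) + 1 + ℓ) = ((i:ℤ) + ℓ + 1) by ring,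
        show ((j:ℤ) - (r:ℕ) + ℓ) = ((j:ℤ) + ℓ + 1 - (r:ℕ) - 1) by ring]
  have hg0 : Summable (fun ℓ : ℕ => KFA.gser t r i j ℓ (t r)) := by
    have := (KFA.summable_bb t ((i:ℤ) + 1) ((j:ℤ) + 1)).congr (g := fun ℓ : ℕ =>
        bcoef t ((i:ℤ) + ℓ + 1) * bcoef t ((j:ℤ) + ℓ + 1)) fun ℓ => by
      rw [show ((i:ℤ) + 1 + ℓ) = ((i:ℤ) + ℓ + 1) by ring,
        show ((j:ℤ) + 1 + ℓ) = ((j:ℤ) + ℓ + 1) by ring]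
    refine this.congr fun ℓ => ?_
    unfold KFA.gser
    rw [hut]
  -- the series of derivatives
  have KEY := hasDerivAt_tsum_of_isPreconnected
    (u := fun ℓ : ℕ => 4 * (Real.exp (2 * 2 ^ M * ((∑ r', ‖t r'‖) + (‖t r‖ + 1)))
        * 2 ^ ((r:ℕ) + 1)) ^ 2 * ((4:ℝ)⁻¹) ^ ℓ)
    (g := KFA.gser t r i j) (g' := KFA.gser' t r i j)
    (y₀ := t r) (y := t r) (t := ball (t r) 1)
    ((summable_geometric_of_lt_one (by norm_num) (by norm_num)).mul_left _)
    isOpen_ball (convex_ball _ _).isPreconnected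
    (fun ℓ y _ => KFA.gser_hasDerivAt t r i j ℓ y)
    (fun ℓ y hy => KFA.gser'_bound t r i j ℓ hy)
    (mem_ball_self one_pos) hg0 (mem_ball_self one_pos)
  -- identify the sum of derivatives with the right-hand side
  have hexp : ∀ ℓ : ℕ, KFA.gser' t r i j ℓ (t r)
      = (bcoef t ((i:ℤ) + ℓ + 1 + (r:ℕ) + 1) * bcoef t ((j:ℤ) + ℓ + 1)
          - bcoef t ((i:ℤ) + ℓ + 1 - (r:ℕ) - 1) * bcoef t ((j:ℤ) + ℓ + 1))
        + (bcoef t ((i:ℤ) + ℓ + 1) * bcoef t ((j:ℤ) + ℓ + 1 + (r:ℕ) + 1)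
          - bcoef t ((i:ℤ) + ℓ + 1) * bcoef t ((j:ℤ) + ℓ + 1 - (r:ℕ) - 1)) := by
    intro ℓ
    unfold KFA.gser'
    rw [hut]
    ring
  have eP1 : (∑' ℓ : ℕ, bcoef t ((i:ℤ) + ℓ + 1 + (r:ℕ) + 1) * bcoef t ((j:ℤ) + ℓ + 1))
      = Kmat t (i + ((r:ℕ) + 1)) j := by
    simp only [Kmat]
    exact tsum_congr fun ℓ => by
      rw [show (((i + ((r:ℕ) + 1) : ℕ) : ℤ) + ℓ + 1) = ((i:ℤ) + ℓ + 1 + (r:ℕ) + 1) by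
        push_cast; ring]
  have eP2 : (∑' ℓ : ℕ, bcoef t ((i:ℤ) + ℓ + 1) * bcoef t ((j:ℤ) + ℓ + 1 + (r:ℕ) + 1))
      = Kmat t i (j + ((r:ℕ) + 1)) := by
    simp only [Kmat]
    exact tsum_congr fun ℓ => by
      rw [show (((j + ((r:ℕ) + 1) : ℕ) : ℤ) + ℓ + 1) = ((j:ℤ) + ℓ + 1 + (r:ℕ) + 1) by
        push_cast; ring]
  have eQ1 : (∑' ℓ : ℕ, bcoef t ((i:ℤ) + ℓ + 1 - (r:ℕ) - 1) * bcoef t ((j:ℤ) + ℓ + 1))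
      = (if (r:ℕ) + 1 ≤ i then Kmat t (i - ((r:ℕ) + 1)) j else 0)
        + (if i < (r:ℕ) + 1 then hvec t ((r:ℕ) + 1) i j else 0) := by
    rcases le_or_gt ((r:ℕ) + 1) i with h | h
    · rw [if_pos h, if_neg (not_lt.2 h), add_zero]
      simp only [Kmat]
      exact tsum_congr fun ℓ => by
        rw [show (((i - ((r:ℕ) + 1) : ℕ) : ℤ) + ℓ + 1) = ((i:ℤ) + ℓ + 1 - (r:ℕ) - 1) by omega]
    · rw [if_neg (not_le.2 h), if_pos h, zero_add]
      simp only [hvec]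
      exact tsum_congr fun ℓ => by
        rw [mul_comm,
          show ((ℓ:ℤ) + i + 1 - (((r:ℕ) + 1 : ℕ) : ℤ)) = ((i:ℤ) + ℓ + 1 - (r:ℕ) - 1) by
            push_cast; ring]
  have eQ2 : (∑' ℓ : ℕ, bcoef t ((i:ℤ) + ℓ + 1) * bcoef t ((j:ℤ) + ℓ + 1 - (r:ℕ) - 1))
      = (if (r:ℕ) + 1 ≤ j then Kmat t i (j - ((r:ℕ) + 1)) else 0)
        + (if j < (r:ℕ) + 1 then hvec t ((r:ℕ) + 1) j i else 0) := by
    rcases le_or_gt ((r:ℕ) + 1) j with h | h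
    · rw [if_pos h, if_neg (not_lt.2 h), add_zero]
      simp only [Kmat]
      exact tsum_congr fun ℓ => by
        rw [show (((j - ((r:ℕ) + 1) : ℕ) : ℤ) + ℓ + 1) = ((j:ℤ) + ℓ + 1 - (r:ℕ) - 1) by omega]
    · rw [if_neg (not_le.2 h), if_pos h, zero_add]
      simp only [hvec]
      exact tsum_congr fun ℓ => by
        rw [show ((ℓ:ℤ) + j + 1 - (((r:ℕ) + 1 : ℕ) : ℤ)) = ((j:ℤ) + ℓ + 1 - (r:ℕ) - 1) by
          push_cast; ring]
  have hval : (∑' ℓ : ℕ, KFA.gser' t r i j ℓ (t r))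
      = Kmat t (i + ((r : ℕ) + 1)) j
        - (if (r : ℕ) + 1 ≤ i then Kmat t (i - ((r : ℕ) + 1)) j else 0)
        + Kmat t i (j + ((r : ℕ) + 1))
        - (if (r : ℕ) + 1 ≤ j then Kmat t i (j - ((r : ℕ) + 1)) else 0)
        - ((if i < (r : ℕ) + 1 then hvec t ((r : ℕ) + 1) i j else 0)
            + (if j < (r : ℕ) + 1 then hvec t ((r : ℕ) + 1) j i else 0)) := by
    rw [tsum_congr hexp, Summable.tsum_add (hP1.sub hQ1) (hP2.sub hQ2), Summable.tsum_sub hP1 hQ1,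
      Summable.tsum_sub hP2 hQ2, eP1, eP2, eQ1, eQ2]
    ring
  rw [← hval]
  exact KEY
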